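/- Every finite digraph whose missing graph is a cycle of length 3 (C₃) has a vertex v with the second neighborhood property, i.e. |N⁺(v)| ≤ |N⁺⁺(v)|. -/

import Mathlib

open scoped Classical

/-- First out-neighborhood of `v` in the digraph with arc relation `E`. -/
def Nplus {V : Type*} (E : V → V → Prop) (v : V) : Set V := {u | E v u}

/-- Second out-neighborhood: vertices at directed distance exactly 2 from `v`. -/
def Nplusplus {V : Type*} (E : V → V → Prop) (v : V) : Set V :=
  {u | u ∉ Nplus E v ∧ u ≠ v ∧ ∃ w ∈ Nplus E v, E w u}

/-- `v` has the second neighborhood property. -/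
def HasSNP {V : Type*} (E : V → V → Prop) (v : V) : Prop :=
  (Nplus E v).ncard ≤ (Nplusplus E v).ncard

/-- `{x, y}` is a missing edge of the digraph `E`. -/
def IsMissingEdge {V : Type*} (E : V → V → Prop) (x y : V) : Prop :=
  x ≠ y ∧ ¬ E x y ∧ ¬ E y x

/-- The ordered missing edge `(x₁, y₁)` loses to the ordered missing edge `(x₂, y₂)`. -/
def OLoses {V : Type*} (E : V → V → Prop) (x₁ y₁ x₂ y₂ : V) : Prop :=
  E x₁ x₂ ∧ y₂ ∉ Nplus E x₁ ∪ Nplusplus E x₁ ∧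
  E y₁ y₂ ∧ x₂ ∉ Nplus E y₁ ∪ Nplusplus E y₁

/-- The missing edge `{a, b}` loses to the missing edge `{c, d}`:
some ordering of the endpoints satisfies the ordered losing relation. -/
def Loses {V : Type*} (E : V → V → Prop) (a b c d : V) : Prop :=
  OLoses E a b c d ∨ OLoses E a b d c ∨ OLoses E b a c d ∨ OLoses E b a d c

/-- The missing edge `{a, b}` is good. -/
def Good {V : Type*} (E : V → V → Prop) (a b : V) : Prop :=
  (∀ v, v ≠ a → v ≠ b → E v a → b ∈ Nplus E v ∪ Nplusplus E v) ∨
  (∀ v, v ≠ a → v ≠ b → E v b → a ∈ Nplus E v ∪ Nplusplus E v)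

/-- Arc of the dependency digraph Δ: the missing edge `e` loses to the missing edge `f`. -/
def DeltaArc {V : Type*} (E : V → V → Prop) (e f : Sym2 V) : Prop :=
  ∃ a b c d : V, e = s(a, b) ∧ f = s(c, d) ∧
    IsMissingEdge E a b ∧ IsMissingEdge E c d ∧ OLoses E a b c d

namespace SNPAux

variable {V : Type*}

/-- Number of forward arcs of `R` along the list. -/
noncomputable def score (R : V → V → Prop) : List V → ℕ
  | [] => 0
  | x :: l => l.countP (fun y => decide (R x y)) + score R l

/-- Number of arcs of `R` from `X` to `Y`. -/
noncomputable def cross (R : V → V → Prop) (X Y : List V) : ℕ :=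
  (X.map (fun x => Y.countP (fun y => decide (R x y)))).sum

lemma score_append (R : V → V → Prop) (X Y : List V) :
    score R (X ++ Y) = score R X + score R Y + cross R X Y := by
  induction X with
  | nil => simp [score, cross]
  | cons x X ih =>
      have e1 : score R ((x :: X) ++ Y) =
          (X ++ Y).countP (fun y => decide (R x y)) + score R (X ++ Y) := rfl
      have e2 : score R (x :: X) = X.countP (fun y => decide (R x y)) + score R X := rfl
      have e3 : cross R (x :: X) Y = Y.countP (fun y => decide (R x y)) + cross R X Y := by
        simp [cross]
      rw [e1, e2, e3, List.countP_append, ih]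
      omega

lemma cross_right_perm (R : V → V → Prop) (X : List V) {Y Y' : List V} (h : Y.Perm Y') :
    cross R X Y = cross R X Y' := by
  induction X with
  | nil => rfl
  | cons x X ih =>
      simp only [cross, List.map_cons, List.sum_cons] at *
      rw [ih, h.countP_eq]

lemma cross_left_perm (R : V → V → Prop) (Y : List V) {X X' : List V} (h : X.Perm X') :
    cross R X Y = cross R X' Y :=
  List.Perm.sum_eq (h.map _)

lemma cross_singleton (R : V → V → Prop) (m : List V) (u : V) :
    cross R m [u] = m.countP (fun x => decide (R x u)) := by
  induction m with
  | nil => rfl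
  | cons x m ih =>
      simp only [cross, List.map_cons, List.sum_cons, List.countP_cons] at *
      rw [ih]
      simp [List.countP_cons]
      omega

lemma block_ineq (R : V → V → Prop) {l : List V}
    (hmax : ∀ l', l'.Perm l → score R l' ≤ score R l)
    (Z m : List V) (u : V) (C : List V) (h : l = Z ++ (m ++ u :: C)) :
    m.countP (fun x => decide (R u x)) ≤ m.countP (fun x => decide (R x u)) := by
  have h1 : l = Z ++ ((m ++ [u]) ++ C) := by
    rw [h]; simp [List.append_assoc]
  have hperm : (Z ++ ((u :: m) ++ C)).Perm l := by
    rw [h1]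
    exact ((List.perm_append_singleton u m).symm.append_right C).append_left Z
  have hle := hmax _ hperm
  rw [h1] at hle
  have L1 : score R (Z ++ ((u :: m) ++ C)) =
      score R Z + (score R (u :: m) + score R C + cross R (u :: m) C) +
        cross R Z ((u :: m) ++ C) := by
    rw [score_append, score_append]
  have L2 : score R (Z ++ ((m ++ [u]) ++ C)) =
      score R Z + (score R (m ++ [u]) + score R C + cross R (m ++ [u]) C) +
        cross R Z ((m ++ [u]) ++ C) := by
    rw [score_append, score_append]
  have e1 : cross R (u :: m) C = cross R (m ++ [u]) C :=
    cross_left_perm R C (List.perm_append_singleton u m).symm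
  have e2 : cross R Z ((u :: m) ++ C) = cross R Z ((m ++ [u]) ++ C) :=
    cross_right_perm R Z (((List.perm_append_singleton u m).symm).append_right C)
  have e3 : score R (m ++ [u]) = score R m + cross R m [u] := by
    rw [score_append]; simp [score]
  have e4 : score R (u :: m) = m.countP (fun y => decide (R u y)) + score R m := rfl
  have e5 : cross R m [u] = m.countP (fun x => decide (R x u)) := cross_singleton R m u
  rw [L1, L2, e1, e2, e3, e4, e5] at hle
  omega

lemma exists_last_sat {p : V → Prop} :
    ∀ {A : List V}, (∃ x ∈ A, p x) →
      ∃ A₁ b m, A = A₁ ++ b :: m ∧ p b ∧ ∀ x ∈ m, ¬ p x := by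
  intro A
  induction A with
  | nil => rintro ⟨x, hx, -⟩; cases hx
  | cons y A ih =>
      intro h
      by_cases hA : ∃ x ∈ A, p x
      · obtain ⟨A₁, b, m, rfl, hb, hm⟩ := ih hA
        exact ⟨y :: A₁, b, m, rfl, hb, hm⟩
      · have hy : p y := by
          obtain ⟨x, hx, hpx⟩ := h
          rcases List.mem_cons.1 hx with rfl | hx
          · exact hpx
          · exact absurd ⟨x, hx, hpx⟩ hA
        exact ⟨[], y, A, rfl, hy, fun x hx hpx => hA ⟨x, hx, hpx⟩⟩

lemma countP_eq_ncard (S : Set V) (L : List V) (hnd : L.Nodup) (hsub : ∀ x, x ∈ S → x ∈ L) :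
    L.countP (fun x => decide (x ∈ S)) = S.ncard := by
  have h1 : S = ↑((L.filter (fun x => decide (x ∈ S))).toFinset) := by
    ext x
    simp only [List.coe_toFinset, Set.mem_setOf_eq, List.mem_filter, decide_eq_true_eq]
    exact ⟨fun hx => ⟨hsub x hx, hx⟩, fun h => h.2⟩
  conv_rhs => rw [h1]
  rw [Set.ncard_coe_finset, List.toFinset_card_of_nodup (hnd.filter _),
    List.countP_eq_length_filter]

lemma main_count (R : V → V → Prop) (P Q : Set V) (Bad : V → Prop) (f : V)
    (l A₀ : List V) (hl : l = A₀ ++ [f]) (hnd : l.Nodup)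
    (hmax : ∀ l', l'.Perm l → score R l' ≤ score R l)
    (hGoodAll : ∀ x, x ≠ f → ¬ Bad x → x ∈ P ∨ x ∈ Q)
    (hBadP : ∀ x, Bad x → x ∉ P) (hBadQ : ∀ x, Bad x → x ∉ Q)
    (i1 : ∀ u x, (Bad u ∨ u = f) → x ∈ P → R u x)
    (i2 : ∀ u x, (Bad u ∨ u = f) → x ∈ P → ¬ R x u) :
    A₀.countP (fun x => decide (x ∈ P)) ≤ A₀.countP (fun x => decide (x ∈ Q)) := by
  have hlast : ∀ (A : List V) (u : V) (C : List V), l = A ++ u :: C → f ∈ u :: C := by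
    intro A u C h
    have h' : A ++ u :: C = A₀ ++ [f] := by rw [← h, hl]
    rcases List.eq_nil_or_concat' C with rfl | ⟨C', c, rfl⟩
    · have h2 := (List.append_inj' h' rfl).2
      simp only [List.cons.injEq] at h2
      simp [h2.1]
    · have h'' : (A ++ u :: C') ++ [c] = A₀ ++ [f] := by
        rw [← h']; simp
      have h2 := (List.append_inj' h'' rfl).2
      simp only [List.cons.injEq] at h2
      simp [h2.1]
  have block : ∀ (Z msub : List V) (u : V) (C : List V), l = Z ++ (msub ++ u :: C) →
      (Bad u ∨ u = f) → (∀ x ∈ msub, x ∈ P ∨ x ∈ Q) →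
      msub.countP (fun x => decide (x ∈ P)) ≤ msub.countP (fun x => decide (x ∈ Q)) := by
    intro Z msub u C h hu hm
    have k := block_ineq R hmax Z msub u C h
    have k1 : msub.countP (fun x => decide (x ∈ P)) ≤
        msub.countP (fun x => decide (R u x)) := by
      apply List.countP_mono_left
      intro x hx hpx
      simp only [decide_eq_true_eq] at hpx ⊢
      exact i1 u x hu hpx
    have k2 : msub.countP (fun x => decide (R x u)) ≤
        msub.countP (fun x => decide (x ∈ Q)) := by
      apply List.countP_mono_left
      intro x hx hpx
      simp only [decide_eq_true_eq] at hpx ⊢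
      rcases hm x hx with hP | hQ
      · exact absurd hpx (i2 u x hu hP)
      · exact hQ
    omega
  have main : ∀ (n : ℕ) (A : List V) (u : V) (C : List V), A.length ≤ n →
      l = A ++ u :: C → (Bad u ∨ u = f) →
      A.countP (fun x => decide (x ∈ P)) ≤ A.countP (fun x => decide (x ∈ Q)) := by
    intro n
    induction n with
    | zero =>
        intro A u C hA h hu
        have hA0 : A = [] := List.length_eq_zero_iff.mp (Nat.le_zero.mp hA)
        subst hA0; simp
    | succ n ih =>
        intro A u C hA h hu
        by_cases hB : ∃ x ∈ A, Bad x
        · obtain ⟨A₁, b, msub, rfl, hb, hmNoBad⟩ := exists_last_sat hB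
          have hsplit : l = (A₁ ++ [b]) ++ (msub ++ u :: C) := by
            rw [h]; simp
          have hdisj := List.disjoint_of_nodup_append (l₁ := A₁ ++ b :: msub)
            (l₂ := u :: C) (by rw [← h]; exact hnd)
          have hfuC : f ∈ u :: C := hlast _ u C h
          have hgood : ∀ x ∈ msub, x ∈ P ∨ x ∈ Q := by
            intro x hx
            have hxA : x ∈ A₁ ++ b :: msub := by simp [hx]
            have hfne : x ≠ f := fun hxf => hdisj hxA (hxf ▸ hfuC)
            exact hGoodAll x hfne (hmNoBad x hx)
          have hblk := block (A₁ ++ [b]) msub u C hsplit hu hgood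
          have hlen : A₁.length ≤ n := by
            have : (A₁ ++ b :: msub).length ≤ n + 1 := hA
            simp [List.length_append] at this
            omega
          have hIH : A₁.countP (fun x => decide (x ∈ P)) ≤
              A₁.countP (fun x => decide (x ∈ Q)) :=
            ih A₁ b (msub ++ u :: C) hlen (by rw [h]; simp) (Or.inl hb)
          have hbP : (decide (b ∈ P)) = false := by
            simp [hBadP b hb]
          have hbQ : (decide (b ∈ Q)) = false := by
            simp [hBadQ b hb]
          have eP : (A₁ ++ b :: msub).countP (fun x => decide (x ∈ P)) =
              A₁.countP (fun x => decide (x ∈ P)) + msub.countP (fun x => decide (x ∈ P)) := by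
            rw [List.countP_append, List.countP_cons, hbP]; simp
          have eQ : (A₁ ++ b :: msub).countP (fun x => decide (x ∈ Q)) =
              A₁.countP (fun x => decide (x ∈ Q)) + msub.countP (fun x => decide (x ∈ Q)) := by
            rw [List.countP_append, List.countP_cons, hbQ]; simp
          rw [eP, eQ]
          omega
        · push_neg at hB
          have hdisj := List.disjoint_of_nodup_append (l₁ := A)
            (l₂ := u :: C) (by rw [← h]; exact hnd)
          have hfuC : f ∈ u :: C := hlast A u C h
          have hgood : ∀ x ∈ A, x ∈ P ∨ x ∈ Q := by
            intro x hx
            have hfne : x ≠ f := fun hxf => hdisj hx (hxf ▸ hfuC)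
            exact hGoodAll x hfne (hB x hx)
          exact block [] A u C (by simpa using h) hu hgood
  exact main A₀.length A₀ f [] le_rfl (by simpa using hl) (Or.inr rfl)

end SNPAux

/-- every finite digraph whose missing graph is a cycle of
length 3 has a vertex with the second neighborhood property. -/
theorem snp_of_missing_C3 {V : Type*} [Fintype V]
    (E : V → V → Prop)
    (hasym : ∀ x y : V, E x y → ¬ E y x)
    (hC3 : ∃ a b c : V, [a, b, c].Pairwise (· ≠ ·) ∧
      ∀ u v : V, IsMissingEdge E u v ↔
        s(u, v) ∈ ({s(a, b), s(b, c), s(c, a)} : Set (Sym2 V))) :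
    ∃ v : V, HasSNP E v := by
  classical
  obtain ⟨a, b, c, hpw, hiff⟩ := hC3
  have hirr : ∀ x : V, ¬ E x x := fun x h => hasym x x h h
  have hab : IsMissingEdge E a b := (hiff a b).2 (by simp)
  have hbc : IsMissingEdge E b c := (hiff b c).2 (by simp)
  have hca : IsMissingEdge E c a := (hiff c a).2 (by simp)
  have htriNoE : ∀ x y : V, (x = a ∨ x = b ∨ x = c) → (y = a ∨ y = b ∨ y = c) → ¬ E x y := by
    intro x y hx hy
    rcases hx with rfl | rfl | rfl <;> rcases hy with rfl | rfl | rfl <;>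
      first
        | exact hirr _
        | exact hab.2.1
        | exact hab.2.2
        | exact hbc.2.1
        | exact hbc.2.2
        | exact hca.2.1
        | exact hca.2.2
  have hmemtri : ∀ u v : V, IsMissingEdge E u v →
      (u = a ∨ u = b ∨ u = c) ∧ (v = a ∨ v = b ∨ v = c) := by
    intro u v huv
    have h' := (hiff u v).1 huv
    simp only [Set.mem_insert_iff, Set.mem_singleton_iff, Sym2.eq_iff] at h'
    rcases h' with (⟨rfl, rfl⟩ | ⟨rfl, rfl⟩) | (⟨rfl, rfl⟩ | ⟨rfl, rfl⟩) | (⟨rfl, rfl⟩ | ⟨rfl, rfl⟩) <;>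
      simp
  -- every missing edge admits a "good" orientation
  have hGoodPair : ∀ u v : V, IsMissingEdge E u v →
      ∃ p q : V, ((p = u ∧ q = v) ∨ (p = v ∧ q = u)) ∧
        ∀ z, z ≠ p → z ≠ q → E z p → q ∈ Nplus E z ∪ Nplusplus E z := by
    intro u v huv
    by_contra hcon
    push_neg at hcon
    have h1 := hcon u v (Or.inl ⟨rfl, rfl⟩)
    have h2 := hcon v u (Or.inr ⟨rfl, rfl⟩)
    obtain ⟨z₁, hz₁u, hz₁v, hz₁E, hz₁N⟩ := h1
    obtain ⟨z₂, hz₂v, hz₂u, hz₂E, hz₂N⟩ := h2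
    have hz12 : z₁ ≠ z₂ := by
      rintro rfl
      exact hz₁N (Set.mem_union_left _ hz₂E)
    have hnE12 : ¬ E z₁ z₂ := by
      intro hE
      apply hz₁N
      refine Set.mem_union_right _ ?_
      exact ⟨fun hv => hz₁N (Set.mem_union_left _ hv), Ne.symm hz₁v, z₂, hE, hz₂E⟩
    have hnE21 : ¬ E z₂ z₁ := by
      intro hE
      apply hz₂N
      refine Set.mem_union_right _ ?_
      exact ⟨fun hv => hz₂N (Set.mem_union_left _ hv), Ne.symm hz₂u, z₁, hE, hz₁E⟩
    have hmiss12 : IsMissingEdge E z₁ z₂ := ⟨hz12, hnE12, hnE21⟩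
    exact htriNoE z₁ u (hmemtri _ _ hmiss12).1 (hmemtri _ _ huv).1 hz₁E
  obtain ⟨p₁, q₁, hpq₁, hG₁⟩ := hGoodPair a b hab
  obtain ⟨p₂, q₂, hpq₂, hG₂⟩ := hGoodPair b c hbc
  obtain ⟨p₃, q₃, hpq₃, hG₃⟩ := hGoodPair c a hca
  obtain ⟨T, hTE, hTarc, hTtotal⟩ :
      ∃ T : V → V → Prop,
        (∀ u v, E u v → T u v) ∧
        (∀ u v, T u v → E u v ∨ ((¬ E u v ∧ ¬ E v u) ∧
          ∀ z, z ≠ u → z ≠ v → E z u → v ∈ Nplus E z ∪ Nplusplus E z)) ∧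
        (∀ u v, IsMissingEdge E u v → T u v ∨ T v u) := by
    refine ⟨fun u v => E u v ∨ (u = p₁ ∧ v = q₁) ∨ (u = p₂ ∧ v = q₂) ∨ (u = p₃ ∧ v = q₃),
      fun u v h => Or.inl h, ?_, ?_⟩
    · rintro u v (h | ⟨rfl, rfl⟩ | ⟨rfl, rfl⟩ | ⟨rfl, rfl⟩)
      · exact Or.inl h
      · refine Or.inr ⟨?_, hG₁⟩
        rcases hpq₁ with ⟨rfl, rfl⟩ | ⟨rfl, rfl⟩
        · exact ⟨hab.2.1, hab.2.2⟩
        · exact ⟨hab.2.2, hab.2.1⟩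
      · refine Or.inr ⟨?_, hG₂⟩
        rcases hpq₂ with ⟨rfl, rfl⟩ | ⟨rfl, rfl⟩
        · exact ⟨hbc.2.1, hbc.2.2⟩
        · exact ⟨hbc.2.2, hbc.2.1⟩
      · refine Or.inr ⟨?_, hG₃⟩
        rcases hpq₃ with ⟨rfl, rfl⟩ | ⟨rfl, rfl⟩
        · exact ⟨hca.2.1, hca.2.2⟩
        · exact ⟨hca.2.2, hca.2.1⟩
    · intro u v huv
      have h' := (hiff u v).1 huv
      simp only [Set.mem_insert_iff, Set.mem_singleton_iff, Sym2.eq_iff] at h'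
      rcases h' with (⟨rfl, rfl⟩ | ⟨rfl, rfl⟩) | (⟨rfl, rfl⟩ | ⟨rfl, rfl⟩) |
        (⟨rfl, rfl⟩ | ⟨rfl, rfl⟩)
      · rcases hpq₁ with ⟨hp, hq⟩ | ⟨hp, hq⟩
        · exact Or.inl (Or.inr (Or.inl ⟨hp.symm, hq.symm⟩))
        · exact Or.inr (Or.inr (Or.inl ⟨hp.symm, hq.symm⟩))
      · rcases hpq₁ with ⟨hp, hq⟩ | ⟨hp, hq⟩
        · exact Or.inr (Or.inr (Or.inl ⟨hp.symm, hq.symm⟩))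
        · exact Or.inl (Or.inr (Or.inl ⟨hp.symm, hq.symm⟩))
      · rcases hpq₂ with ⟨hp, hq⟩ | ⟨hp, hq⟩
        · exact Or.inl (Or.inr (Or.inr (Or.inl ⟨hp.symm, hq.symm⟩)))
        · exact Or.inr (Or.inr (Or.inr (Or.inl ⟨hp.symm, hq.symm⟩)))
      · rcases hpq₂ with ⟨hp, hq⟩ | ⟨hp, hq⟩
        · exact Or.inr (Or.inr (Or.inr (Or.inl ⟨hp.symm, hq.symm⟩)))
        · exact Or.inl (Or.inr (Or.inr (Or.inl ⟨hp.symm, hq.symm⟩)))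
      · rcases hpq₃ with ⟨hp, hq⟩ | ⟨hp, hq⟩
        · exact Or.inl (Or.inr (Or.inr (Or.inr ⟨hp.symm, hq.symm⟩)))
        · exact Or.inr (Or.inr (Or.inr (Or.inr ⟨hp.symm, hq.symm⟩)))
      · rcases hpq₃ with ⟨hp, hq⟩ | ⟨hp, hq⟩
        · exact Or.inr (Or.inr (Or.inr (Or.inr ⟨hp.symm, hq.symm⟩)))
        · exact Or.inl (Or.inr (Or.inr (Or.inr ⟨hp.symm, hq.symm⟩)))
  -- choose a maximum-score ("median") order for T
  set l₀ : List V := (Finset.univ : Finset V).toList with hl₀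
  have hmem₀ : ∀ x : V, x ∈ l₀ := by
    intro x; rw [hl₀]; simp [Finset.mem_toList]
  have hpermne : l₀.permutations ≠ [] := by
    intro h
    have : l₀ ∈ l₀.permutations := List.mem_permutations.mpr (List.Perm.refl _)
    rw [h] at this; cases this
  obtain ⟨l, hlarg⟩ : ∃ l, l ∈ l₀.permutations.argmax (SNPAux.score T) := by
    rcases hh : l₀.permutations.argmax (SNPAux.score T) with _ | l
    · exact absurd (List.argmax_eq_none.mp hh) hpermne
    · exact ⟨l, by simp [Option.mem_def]⟩
  have hlperm : l.Perm l₀ := List.perm_of_mem_permutations (List.argmax_mem hlarg)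
  have hmax : ∀ l', l'.Perm l → SNPAux.score T l' ≤ SNPAux.score T l := by
    intro l' h'
    exact List.le_of_mem_argmax (List.mem_permutations.mpr (h'.trans hlperm)) hlarg
  have hnd : l.Nodup := (hlperm.nodup_iff).mpr (Finset.nodup_toList _)
  have hmeml : ∀ x : V, x ∈ l := fun x => hlperm.mem_iff.mpr (hmem₀ x)
  have hlne : l ≠ [] := fun h => by simpa [h] using hmeml a
  set f := l.getLast hlne with hf
  set A₀ := l.dropLast with hA₀
  have hlsplit : l = A₀ ++ [f] := (List.dropLast_append_getLast hlne).symm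
  set P := Nplus E f with hP
  set Q := Nplusplus E f with hQ
  set Bad : V → Prop := fun x => x ≠ f ∧ x ∉ P ∧ x ∉ Q with hBadDef
  have hBadnoin : ∀ u, Bad u → ∀ x, x ∈ P → ¬ E x u := by
    intro u hu x hx hE
    exact hu.2.2 ⟨hu.2.1, hu.1, x, hx, hE⟩
  have i1 : ∀ u x, (Bad u ∨ u = f) → x ∈ P → T u x := by
    intro u x hu hx
    have hfx : E f x := hx
    rcases hu with hu | rfl
    · have hxf : x ≠ f := fun h => hirr f (h ▸ hfx)
      have hxu : ¬ E x u := hBadnoin u hu x hx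
      by_cases hEux : E u x
      · exact hTE u x hEux
      · have hne : u ≠ x := fun h => hu.2.1 (h ▸ hx)
        have hmissux : IsMissingEdge E u x := ⟨hne, hEux, hxu⟩
        rcases hTtotal u x hmissux with h | h
        · exact h
        · rcases hTarc x u h with hE | ⟨-, hGxu⟩
          · exact absurd hE hxu
          · have hmemN := hGxu f (Ne.symm hxf) (fun h => hu.1 h.symm) hfx
            rw [Set.mem_union] at hmemN
            rcases hmemN with h' | h'
            · exact absurd h' hu.2.1
            · exact absurd h' hu.2.2
    · exact hTE f x hfx
  have i2 : ∀ u x, (Bad u ∨ u = f) → x ∈ P → ¬ T x u := by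
    intro u x hu hx hTxu
    have hfx : E f x := hx
    rcases hTarc x u hTxu with hE | ⟨⟨-, hnEux⟩, hGxu⟩
    · rcases hu with hu | rfl
      · exact hBadnoin u hu x hx hE
      · exact hasym f x hfx hE
    · rcases hu with hu | rfl
      · have hxf : x ≠ f := fun h => hirr f (h ▸ hfx)
        have hmemN := hGxu f (Ne.symm hxf) (fun h => hu.1 h.symm) hfx
        rw [Set.mem_union] at hmemN
        rcases hmemN with h' | h'
        · exact hu.2.1 h'
        · exact hu.2.2 h'
      · exact hnEux hfx
  have hGoodAll : ∀ x, x ≠ f → ¬ Bad x → x ∈ P ∨ x ∈ Q := by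
    intro x hxf hnb
    by_contra hcon
    push_neg at hcon
    exact hnb ⟨hxf, hcon.1, hcon.2⟩
  have key := SNPAux.main_count T P Q Bad f l A₀ hlsplit hnd hmax hGoodAll
    (fun x hx => hx.2.1) (fun x hx => hx.2.2) i1 i2
  have hndA : A₀.Nodup := by
    rw [hlsplit] at hnd
    exact hnd.of_append_left
  have hsubP : ∀ x, x ∈ P → x ∈ A₀ := by
    intro x hx
    have hxl : x ∈ l := hmeml x
    rw [hlsplit] at hxl
    rcases List.mem_append.mp hxl with h | h
    · exact h
    · simp only [List.mem_singleton] at h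
      subst h
      exact absurd (show E f f from hx) (hirr f)
  have hsubQ : ∀ x, x ∈ Q → x ∈ A₀ := by
    intro x hx
    have hxl : x ∈ l := hmeml x
    rw [hlsplit] at hxl
    rcases List.mem_append.mp hxl with h | h
    · exact h
    · simp only [List.mem_singleton] at h
      subst h
      exact absurd rfl hx.2.1
  rw [SNPAux.countP_eq_ncard P A₀ hndA hsubP, SNPAux.countP_eq_ncard Q A₀ hndA hsubQ] at key
  exact ⟨f, key⟩
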